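/- For all x, y ∈ ℍ, the function t ↦ dist(x, eᵗ i) − dist(y, eᵗ i) tends, as t → +∞, to Real.log (Im y) − Real.log (Im x). (The Busemann cocycle based at ∞ in the upper half-plane is B_∞(x,y) = log Im(y) − log Im(x).) -/

import Mathlib

open UpperHalfPlane Matrix Real Filter Topology
open scoped MatrixGroups

noncomputable section

namespace BellisFormal

/-- The point `eᵗ i` of the upper half-plane. -/
def vray (t : ℝ) : ℍ := ⟨⟨0, Real.exp t⟩, Real.exp_pos t⟩

/-- Translation length of `γ`. -/
def transLength (γ : SL(2, ℝ)) : ℝ := ⨅ z : ℍ, dist z (γ • z)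

/-- `γ` is hyperbolic: `|tr γ| > 2`. -/
def IsHyperbolic (γ : SL(2, ℝ)) : Prop :=
  2 < |Matrix.trace (γ : Matrix (Fin 2) (Fin 2) ℝ)|

/-- Axis of `γ`. -/
def Axis (γ : SL(2, ℝ)) : Set ℍ := {z : ℍ | dist z (γ • z) = transLength γ}

/-- `x` is a real fixed point of the Möbius map of `γ`. -/
def IsFixedPt (γ : SL(2, ℝ)) (x : ℝ) : Prop :=
  γ 1 0 * x ^ 2 + (γ 1 1 - γ 0 0) * x - γ 0 1 = 0

def IsAttractingFixedPt (γ : SL(2, ℝ)) (x : ℝ) : Prop :=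
  IsFixedPt γ x ∧ 1 < (γ 1 0 * x + γ 1 1) ^ 2

def IsRepellingFixedPt (γ : SL(2, ℝ)) (x : ℝ) : Prop :=
  IsFixedPt γ x ∧ (γ 1 0 * x + γ 1 1) ^ 2 < 1

instance : TopologicalSpace SL(2, ℝ) :=
  TopologicalSpace.induced (fun g => (g : Matrix (Fin 2) (Fin 2) ℝ)) inferInstance

structure IsNestedSequence (γ : ℕ → SL(2, ℝ)) (γp γm : ℕ → ℝ) (t : ℕ → ℝ) : Prop where
  hyperbolic : ∀ n, IsHyperbolic (γ n)
  discrete : DiscreteTopology (Subgroup.closure (Set.range γ) : Subgroup SL(2, ℝ))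
  attracting : ∀ n, IsAttractingFixedPt (γ n) (γp n)
  repelling : ∀ n, IsRepellingFixedPt (γ n) (γm n)
  plus_pos : ∀ n, 0 < γp n
  plus_mono : StrictMono γp
  minus_neg : ∀ n, γm n < 0
  minus_anti : StrictAnti γm
  t_pos : ∀ n, 0 < t n
  axis_meets : ∀ n, ∀ s : ℝ, 0 ≤ s → (vray s ∈ Axis (γ n) ↔ s = t n)
  len_anti : StrictAnti fun n => transLength (γ n)
  len_tendsto : Filter.Tendsto (fun n => transLength (γ n)) Filter.atTop (nhds 0)

/-- geodesic flow matrix -/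
def A (t : ℝ) : SL(2, ℝ) :=
  ⟨!![Real.exp (t / 2), 0; 0, Real.exp (-(t / 2))], by
    simp [Matrix.det_fin_two_of, ← Real.exp_add]⟩

/-- horocyclic flow matrix -/
def N (s : ℝ) : SL(2, ℝ) :=
  ⟨!![1, s; 0, 1], by simp [Matrix.det_fin_two_of]⟩

/-- the distance `d₁` between unit tangent vectors encoded as elements of `SL(2,ℝ)` -/
def d1 (g h : SL(2, ℝ)) : ℝ :=
  dist (g • vray 0) (h • vray 0) + dist (g • vray 1) (h • vray 1)

/-- product `α 0 * α 1 * ⋯ * α n` -/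
def seqProd (α : ℕ → SL(2, ℝ)) (n : ℕ) : SL(2, ℝ) :=
  ((List.range (n + 1)).map α).prod


/-- the point `a + y i` of the upper half-plane -/
def mkPt (a y : ℝ) (hy : 0 < y) : ℍ := ⟨⟨a, y⟩, hy⟩

/-- the Busemann cocycle values `r_n = B_∞(β_n⁻¹ • i, i)` -/
def busR (α : ℕ → SL(2, ℝ)) (n : ℕ) : ℝ :=
  - Real.log (((seqProd α n)⁻¹ • UpperHalfPlane.I).im)


lemma dist_vray (x : ℍ) (t : ℝ) :
    dist x (vray t) = 2 * Real.arsinh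
      (Real.sqrt (x.re ^ 2 + (x.im - Real.exp t) ^ 2) / (2 * Real.sqrt (x.im * Real.exp t))) := by
  rw [UpperHalfPlane.dist_eq]
  congr 3
  · rw [Complex.dist_eq, Complex.norm_def, Complex.normSq_apply]
    have h1 : ((x : ℂ) - (vray t : ℂ)).re = x.re := by
      simp [vray, Complex.sub_re, UpperHalfPlane.coe_re]
    have h2 : ((x : ℂ) - (vray t : ℂ)).im = x.im - Real.exp t := by
      simp [vray, Complex.sub_im, UpperHalfPlane.coe_im]
    rw [h1, h2]; ring_nf

lemma aux (x : ℍ) :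
    Tendsto (fun t : ℝ => dist x (vray t) - (t - Real.log x.im)) atTop (nhds 0) := by
  set a := x.re with ha
  set b := x.im with hbdef
  have hb : 0 < b := x.im_pos
  set P : ℝ → ℝ := fun t => Real.sqrt (a ^ 2 + (b - Real.exp t) ^ 2) with hP
  set Q : ℝ → ℝ := fun t => Real.sqrt (a ^ 2 + (b + Real.exp t) ^ 2) with hQ
  have hQpos : ∀ t, 0 < Q t := by
    intro t
    apply Real.sqrt_pos.2
    have : 0 < b + Real.exp t := by positivity
    positivity
  have hPQ : ∀ t, 0 < P t + Q t := fun t =>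
    add_pos_of_nonneg_of_pos (Real.sqrt_nonneg _) (hQpos t)
  have key : ∀ t, dist x (vray t) - (t - Real.log b) =
      2 * Real.log ((P t + Q t) / (2 * Real.exp t)) := by
    intro t
    have he : (0:ℝ) < Real.exp t := Real.exp_pos t
    have hbe : (0:ℝ) < b * Real.exp t := by positivity
    rw [dist_vray, ← ha, ← hbdef]
    have hsq : Real.sqrt (1 + (P t / (2 * Real.sqrt (b * Real.exp t))) ^ 2)
        = Q t / (2 * Real.sqrt (b * Real.exp t)) := by
      have h4 : (2 * Real.sqrt (b * Real.exp t)) ^ 2 = 4 * (b * Real.exp t) := by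
        rw [mul_pow, Real.sq_sqrt hbe.le]; ring
      have hPsq : (P t) ^ 2 = a ^ 2 + (b - Real.exp t) ^ 2 := by
        rw [hP]; exact Real.sq_sqrt (by positivity)
      have : 1 + (P t / (2 * Real.sqrt (b * Real.exp t))) ^ 2
          = (a ^ 2 + (b + Real.exp t) ^ 2) / (2 * Real.sqrt (b * Real.exp t)) ^ 2 := by
        rw [div_pow, hPsq, h4]
        field_simp
        ring
      rw [this, Real.sqrt_div (by positivity),
        Real.sqrt_sq (by positivity)]
    simp only [Real.arsinh]
    rw [hsq, ← add_div, Real.log_div (hPQ t).ne'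
      (by positivity), Real.log_div (hPQ t).ne' (by positivity),
      Real.log_mul two_ne_zero (Real.sqrt_pos.2 hbe).ne',
      Real.log_mul two_ne_zero he.ne', Real.log_sqrt hbe.le,
      Real.log_mul hb.ne' he.ne', Real.log_exp]
    ring
  have hR : Tendsto (fun t => (P t + Q t) / (2 * Real.exp t)) atTop (nhds 1) := by
    have hPe : Tendsto (fun t => P t / Real.exp t) atTop (nhds 1) := by
      have heq : ∀ t, P t / Real.exp t
          = Real.sqrt ((a * Real.exp (-t)) ^ 2 + (b * Real.exp (-t) - 1) ^ 2) := by
        intro t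
        have he : (0:ℝ) < Real.exp t := Real.exp_pos t
        rw [hP, ← Real.sqrt_sq he.le, ← Real.sqrt_div (by positivity)]
        congr 1
        rw [Real.exp_neg]
        field_simp
      rw [funext heq]
      have h0 : Tendsto (fun t : ℝ => (a * Real.exp (-t)) ^ 2 + (b * Real.exp (-t) - 1) ^ 2)
          atTop (nhds 1) := by
        have he0 := Real.tendsto_exp_neg_atTop_nhds_zero
        have h1 : Tendsto (fun t : ℝ => a * Real.exp (-t)) atTop (nhds 0) := by
          simpa using he0.const_mul a
        have h2 : Tendsto (fun t : ℝ => b * Real.exp (-t)) atTop (nhds 0) := by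
          simpa using he0.const_mul b
        have := ((h1.pow 2).add (((h2.sub_const 1)).pow 2))
        simpa using this
      have := (Real.continuous_sqrt.tendsto 1).comp h0
      simpa [Function.comp_def] using this
    have hQe : Tendsto (fun t => Q t / Real.exp t) atTop (nhds 1) := by
      have heq : ∀ t, Q t / Real.exp t
          = Real.sqrt ((a * Real.exp (-t)) ^ 2 + (b * Real.exp (-t) + 1) ^ 2) := by
        intro t
        have he : (0:ℝ) < Real.exp t := Real.exp_pos t
        rw [hQ, ← Real.sqrt_sq he.le, ← Real.sqrt_div (by positivity)]
        congr 1
        rw [Real.exp_neg]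
        field_simp
      rw [funext heq]
      have h0 : Tendsto (fun t : ℝ => (a * Real.exp (-t)) ^ 2 + (b * Real.exp (-t) + 1) ^ 2)
          atTop (nhds 1) := by
        have he0 := Real.tendsto_exp_neg_atTop_nhds_zero
        have h1 : Tendsto (fun t : ℝ => a * Real.exp (-t)) atTop (nhds 0) := by
          simpa using he0.const_mul a
        have h2 : Tendsto (fun t : ℝ => b * Real.exp (-t)) atTop (nhds 0) := by
          simpa using he0.const_mul b
        have := ((h1.pow 2).add (((h2.add_const 1)).pow 2))
        simpa using this
      have := (Real.continuous_sqrt.tendsto 1).comp h0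
      simpa [Function.comp_def] using this
    have heq : ∀ t, (P t + Q t) / (2 * Real.exp t)
        = (P t / Real.exp t + Q t / Real.exp t) / 2 := by
      intro t
      rw [← add_div, div_div, mul_comm]
    rw [funext heq]
    have := (hPe.add hQe).div_const 2
    norm_num at this
    exact this
  have hlog : Tendsto (fun t => Real.log ((P t + Q t) / (2 * Real.exp t))) atTop (nhds 0) := by
    have := (Real.continuousAt_log one_ne_zero).tendsto.comp hR
    simpa [Function.comp_def] using this
  have := hlog.const_mul 2
  rw [mul_zero] at this
  exact Tendsto.congr (fun t => (key t).symm) this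

theorem busemann_cocycle_at_infty
    (x y : ℍ) :
    Tendsto (fun t : ℝ => dist x (vray t) - dist y (vray t)) atTop
      (nhds (Real.log y.im - Real.log x.im)) := by
  have h := ((aux x).sub (aux y)).add_const (Real.log y.im - Real.log x.im)
  rw [sub_zero, zero_add] at h
  exact h.congr (fun t => by ring)


end BellisFormal
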